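/- Let A ⊆ Φ⁺ be finite. Then A is biclosed if and only if A is biconvex if and only if A is separable. -/

import Mathlib

open Pointwise

noncomputable section

/-- The set of nonnegative linear combinations of elements of `X`. -/
def coneOf {V : Type*} [AddCommGroup V] [Module ℝ V] (X : Set V) : Set V :=
  {v | ∃ (n : ℕ) (c : Fin n → ℝ) (f : Fin n → V),
    (∀ i, 0 ≤ c i) ∧ (∀ i, f i ∈ X) ∧ ∑ i, c i • f i = v}

/-- A geometric representation of the Coxeter system `cs` on the real quadratic
space `(V, bil)`: each simple generator acts as the `bil`-reflection in its simple
root, and the simple roots form a simple system. -/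
structure GeomRep {B : Type*} [Fintype B] {W : Type*} [Group W]
    (M : CoxeterMatrix B) (cs : CoxeterSystem M W)
    (V : Type*) [AddCommGroup V] [Module ℝ V] where
  /-- the symmetric bilinear form -/
  bil : LinearMap.BilinForm ℝ V
  bil_symm : ∀ u v : V, bil u v = bil v u
  /-- the representation of `W` by linear automorphisms of `V` -/
  π : W →* (V ≃ₗ[ℝ] V)
  /-- the simple roots -/
  α : B → V
  norm_one : ∀ i, bil (α i) (α i) = 1
  simple_refl : ∀ i v, π (cs.simple i) v = v - (2 * bil (α i) v) • α i
  pos_indep : ∀ c : B → ℝ, (∀ i, 0 ≤ c i) → ∑ i, c i • α i = 0 → ∀ i, c i = 0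
  angle_finite : ∀ i j, i ≠ j → M.M i j ≠ 0 →
    bil (α i) (α j) = - Real.cos (Real.pi / (M.M i j : ℝ))
  angle_infinite : ∀ i j, i ≠ j → M.M i j = 0 → bil (α i) (α j) ≤ -1

namespace GeomRep

variable {B : Type*} [Fintype B] {W : Type*} [Group W]
  {M : CoxeterMatrix B} {cs : CoxeterSystem M W}
  {V : Type*} [AddCommGroup V] [Module ℝ V]

/-- The root system `Φ = W(Δ)`. -/
def Phi (G : GeomRep M cs V) : Set V := {v | ∃ (w : W) (i : B), G.π w (G.α i) = v}

/-- The positive roots `Φ⁺ = cone(Δ) ∩ Φ`. -/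
def PhiPos (G : GeomRep M cs V) : Set V := G.Phi ∩ coneOf (Set.range G.α)

/-- The (left) inversion set `N(w) = Φ⁺ ∩ w(Φ⁻)`. -/
def N (G : GeomRep M cs V) (w : W) : Set V := G.PhiPos ∩ (G.π w '' (-G.PhiPos))

/-- `A ⊆ Φ⁺` is closed if for all `α, β ∈ A`, every root in `cone(α,β)` lies in `A`. -/
def IsClosedSet (G : GeomRep M cs V) (A : Set V) : Prop :=
  ∀ a ∈ A, ∀ b ∈ A, coneOf {a, b} ∩ G.Phi ⊆ A

/-- `A` is biclosed if `A` and `Φ⁺ \ A` are both closed. -/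
def IsBiclosed (G : GeomRep M cs V) (A : Set V) : Prop :=
  G.IsClosedSet A ∧ G.IsClosedSet (G.PhiPos \ A)

/-- `A` is convex if `A = cone(A) ∩ Φ`. -/
def IsConvexSet (G : GeomRep M cs V) (A : Set V) : Prop :=
  A = coneOf A ∩ G.Phi

/-- `A` is biconvex if `A` and `Φ⁺ \ A` are both convex. -/
def IsBiconvex (G : GeomRep M cs V) (A : Set V) : Prop :=
  G.IsConvexSet A ∧ G.IsConvexSet (G.PhiPos \ A)

/-- `A ⊆ Φ⁺` is separable if `cone(A) ∩ cone(Φ⁺ \ A) = {0}`. -/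
def IsSeparable (G : GeomRep M cs V) (A : Set V) : Prop :=
  coneOf A ∩ coneOf (G.PhiPos \ A) = {0}

end GeomRep

/-- The right weak order on a Coxeter group. -/
def WeakLE {B : Type*} {W : Type*} [Group W] {M : CoxeterMatrix B}
    (cs : CoxeterSystem M W) (u w : W) : Prop :=
  cs.length u + cs.length (u⁻¹ * w) = cs.length w

/-! ### Auxiliary development -/

namespace ConeAux

variable {V : Type*} [AddCommGroup V] [Module ℝ V]

theorem zero_mem (X : Set V) : (0 : V) ∈ coneOf X :=
  ⟨0, fun _ => 0, fun _ => 0, fun i => le_refl _, fun i => i.elim0, by simp⟩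

theorem subset_cone (X : Set V) : X ⊆ coneOf X := by
  intro x hx
  exact ⟨1, fun _ => 1, fun _ => x, fun _ => zero_le_one, fun _ => hx, by simp⟩

theorem cone_mono {X Y : Set V} (h : X ⊆ Y) : coneOf X ⊆ coneOf Y := by
  rintro v ⟨n, c, f, hc, hf, rfl⟩
  exact ⟨n, c, f, hc, fun i => h (hf i), rfl⟩

theorem add_mem {X : Set V} {u v : V} (hu : u ∈ coneOf X) (hv : v ∈ coneOf X) :
    u + v ∈ coneOf X := by
  obtain ⟨n, c, f, hc, hf, rfl⟩ := hu
  obtain ⟨m, d, g, hd, hg, rfl⟩ := hv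
  refine ⟨n + m, Fin.append c d, Fin.append f g, ?_, ?_, ?_⟩
  · intro i
    rcases i with ⟨i, hi⟩
    exact Fin.addCases (fun j => by simp [Fin.append_left]; exact hc j)
      (fun j => by simp [Fin.append_right]; exact hd j) ⟨i, hi⟩
  · intro i
    exact Fin.addCases (fun j => by simp [Fin.append_left]; exact hf j)
      (fun j => by simp [Fin.append_right]; exact hg j) i
  · rw [Fin.sum_univ_add]
    simp [Fin.append_left, Fin.append_right]

theorem smul_mem {X : Set V} {v : V} {r : ℝ} (hr : 0 ≤ r) (hv : v ∈ coneOf X) :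
    r • v ∈ coneOf X := by
  obtain ⟨n, c, f, hc, hf, rfl⟩ := hv
  exact ⟨n, fun i => r * c i, f, fun i => mul_nonneg hr (hc i),
    hf, by rw [Finset.smul_sum]; simp [mul_smul]⟩

theorem smul_mem' {X : Set V} {v : V} {r : ℝ} (hr : 0 ≤ r) (hv : v ∈ X) :
    r • v ∈ coneOf X := smul_mem hr (subset_cone X hv)

theorem sum_mem {X : Set V} {ι : Type*} (s : Finset ι) {g : ι → V}
    (h : ∀ i ∈ s, g i ∈ coneOf X) : ∑ i ∈ s, g i ∈ coneOf X := by
  classical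
  induction s using Finset.induction_on with
  | empty => simpa using zero_mem X
  | insert _ _ hx ih =>
    rw [Finset.sum_insert hx]
    exact add_mem (h _ (Finset.mem_insert_self _ _))
      (ih fun i hi => h i (Finset.mem_insert_of_mem hi))

theorem cone_trans {X Y : Set V} (h : X ⊆ coneOf Y) : coneOf X ⊆ coneOf Y := by
  rintro v ⟨n, c, f, hc, hf, rfl⟩
  exact sum_mem Finset.univ fun i _ => smul_mem (hc i) (h (hf i))

theorem mem_pair {a b v : V} {p q : ℝ} (hp : 0 ≤ p) (hq : 0 ≤ q)
    (hv : v = p • a + q • b) : v ∈ coneOf ({a, b} : Set V) := by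
  subst hv
  exact add_mem (smul_mem' hp (by simp)) (smul_mem' hq (by simp))

end ConeAux

namespace GeomRep

open ConeAux

variable {B : Type*} [Fintype B] {W : Type*} [Group W]
  {M : CoxeterMatrix B} {cs : CoxeterSystem M W}
  {V : Type*} [AddCommGroup V] [Module ℝ V] (G : GeomRep M cs V)

theorem pi_mul_apply (w w' : W) (v : V) : G.π (w * w') v = G.π w (G.π w' v) := by
  rw [map_mul]; rfl

theorem bil_inv (w : W) : ∀ u v : V, G.bil (G.π w u) (G.π w v) = G.bil u v := by
  refine cs.simple_induction
    (p := fun w => ∀ u v : V, G.bil (G.π w u) (G.π w v) = G.bil u v)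
    w (fun i u v => ?_) (fun u v => by simp) ?_
  · rw [G.simple_refl i u, G.simple_refl i v]
    have h1 : G.bil (G.α i) (G.α i) = 1 := G.norm_one i
    have h2 : G.bil u (G.α i) = G.bil (G.α i) u := G.bil_symm u _
    simp only [map_sub, map_smul, LinearMap.sub_apply, LinearMap.smul_apply,
      smul_eq_mul, h1, h2]
    ring
  · intro w w' hw hw' u v
    rw [G.pi_mul_apply, G.pi_mul_apply, hw, hw']

theorem root_norm {γ : V} (hγ : γ ∈ G.Phi) : G.bil γ γ = 1 := by
  obtain ⟨w, i, rfl⟩ := hγ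
  rw [G.bil_inv w, G.norm_one]

theorem pi_simple_self (i : B) : G.π (cs.simple i) (G.α i) = -G.α i := by
  rw [G.simple_refl, G.norm_one, mul_one, two_smul]
  abel

theorem pi_invol (i : B) (v : V) : G.π (cs.simple i) (G.π (cs.simple i) v) = v := by
  rw [← G.pi_mul_apply, cs.simple_mul_simple_self, map_one]; rfl

theorem alpha_ne_zero (i : B) : G.α i ≠ 0 := by
  classical
  intro h
  have := G.pos_indep (fun j => if j = i then 1 else 0)
    (fun j => by split <;> norm_num)
    (by simp [ite_smul, h]) i
  simp at this

theorem offdiag_nonpos {i j : B} (hij : i ≠ j) : G.bil (G.α i) (G.α j) ≤ 0 := by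
  by_cases hM : M.M i j = 0
  · linarith [G.angle_infinite i j hij hM]
  · rw [G.angle_finite i j hij hM]
    have h2 : 2 ≤ M.M i j := by
      have := M.off_diagonal i j hij; omega
    have hm2 : (2:ℝ) ≤ (M.M i j : ℝ) := by exact_mod_cast h2
    have hmpos : (0:ℝ) < (M.M i j : ℝ) := by linarith
    have hub : Real.pi / (M.M i j : ℝ) ≤ Real.pi / 2 := by
      rw [div_le_div_iff₀ hmpos (by norm_num)]
      nlinarith [mul_nonneg Real.pi_pos.le (by linarith : (0:ℝ) ≤ (M.M i j : ℝ) - 2)]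
    have hlb : 0 ≤ Real.pi / (M.M i j : ℝ) := div_nonneg Real.pi_pos.le hmpos.le
    have : (0:ℝ) ≤ Real.cos (Real.pi / (M.M i j : ℝ)) :=
      Real.cos_nonneg_of_mem_Icc ⟨by linarith [Real.pi_pos], hub⟩
    linarith

theorem zero_not_mem_Phi : (0 : V) ∉ G.Phi := by
  intro h
  have := G.root_norm h
  simp at this

theorem neg_mem_Phi {γ : V} (hγ : γ ∈ G.Phi) : -γ ∈ G.Phi := by
  obtain ⟨w, i, rfl⟩ := hγ
  exact ⟨w * cs.simple i, i, by rw [G.pi_mul_apply, G.pi_simple_self, map_neg]⟩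

theorem pi_mem_Phi (u : W) {γ : V} (hγ : γ ∈ G.Phi) : G.π u γ ∈ G.Phi := by
  obtain ⟨w, i, rfl⟩ := hγ
  exact ⟨u * w, i, by rw [G.pi_mul_apply]⟩

end GeomRep

namespace GeomRep

open ConeAux

variable {B : Type*} [Fintype B] {W : Type*} [Group W]
  {M : CoxeterMatrix B} {cs : CoxeterSystem M W}
  {V : Type*} [AddCommGroup V] [Module ℝ V] (G : GeomRep M cs V)

theorem fin_comb_to_B {ι : Type*} [Fintype ι] (c : ι → ℝ) (b : ι → B)
    (hc : ∀ i, 0 ≤ c i) :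
    ∃ d : B → ℝ, (∀ j, 0 ≤ d j) ∧ (∑ j, d j = ∑ i, c i) ∧
      ∑ j, d j • G.α j = ∑ i, c i • G.α (b i) := by
  classical
  refine ⟨fun j => ∑ i ∈ Finset.univ.filter (fun i => b i = j), c i,
    fun j => Finset.sum_nonneg fun i _ => hc i, ?_, ?_⟩
  · rw [← Finset.sum_fiberwise Finset.univ b c]
  · have key : ∀ j : B, (∑ i ∈ Finset.univ.filter (fun i => b i = j), c i) • G.α j
        = ∑ i ∈ Finset.univ.filter (fun i => b i = j), c i • G.α (b i) := by
      intro j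
      rw [Finset.sum_smul]
      exact Finset.sum_congr rfl fun i hi => by
        rw [(Finset.mem_filter.mp hi).2]
    rw [Finset.sum_congr rfl fun j _ => key j,
      Finset.sum_fiberwise Finset.univ b (fun i => c i • G.α (b i))]

theorem mem_cone_range_iff {v : V} :
    v ∈ coneOf (Set.range G.α) ↔
      ∃ c : B → ℝ, (∀ j, 0 ≤ c j) ∧ ∑ j, c j • G.α j = v := by
  constructor
  · rintro ⟨n, c, f, hc, hf, rfl⟩
    have hb : ∀ i, ∃ j, G.α j = f i := hf
    choose b hbb using hb
    obtain ⟨d, hd, _, hsum⟩ := G.fin_comb_to_B c b hc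
    refine ⟨d, hd, ?_⟩
    rw [hsum]
    exact Finset.sum_congr rfl fun i _ => by rw [hbb i]
  · rintro ⟨c, hc, rfl⟩
    exact sum_mem Finset.univ fun j _ => smul_mem' (hc j) (Set.mem_range_self j)

theorem exists_f : ∃ f : V →ₗ[ℝ] ℝ, ∀ i, 0 < f (G.α i) := by
  classical
  set U := Submodule.span ℝ (Set.range G.α) with hU
  haveI : FiniteDimensional ℝ U := FiniteDimensional.span_of_finite ℝ (Set.finite_range G.α)
  set a : B → U := fun i => ⟨G.α i, Submodule.subset_span (Set.mem_range_self i)⟩ with ha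
  set n := Module.finrank ℝ U with hn
  set e : U ≃ₗ[ℝ] (Fin n → ℝ) := (Module.finBasis ℝ U).equivFun with he
  set x : B → (Fin n → ℝ) := fun i => e (a i) with hx
  have h0 : (0 : Fin n → ℝ) ∉ convexHull ℝ (Set.range x) := by
    intro h
    obtain ⟨ι, _, w, z, hw0, hw1, hz, hsum⟩ := mem_convexHull_iff_exists_fintype.mp h
    have hb : ∀ i, ∃ j, x j = z i := hz
    choose b hbb using hb
    have hV : ∑ i, w i • G.α (b i) = 0 := by
      have : ∑ i, w i • a (b i) = 0 := by
        apply e.injective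
        rw [map_sum, map_zero]
        simp only [map_smul]
        show ∑ i, w i • x (b i) = 0
        simp only [hbb]
        exact hsum
      have := congrArg (Submodule.subtype U) this
      simp only [map_sum, map_smul, map_zero] at this
      exact this
    obtain ⟨d, hd0, hdsum, hdv⟩ := G.fin_comb_to_B w b hw0
    have : ∀ j, d j = 0 := G.pos_indep d hd0 (by rw [hdv, hV])
    rw [Finset.sum_congr rfl fun j _ => this j] at hdsum
    simp [hw1.symm ▸ hdsum.symm] at hdsum
    rw [hw1] at hdsum
    norm_num at hdsum
  obtain ⟨φ, u, hs, hu⟩ := geometric_hahn_banach_closed_point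
    (convex_convexHull ℝ (Set.range x))
    ((Set.finite_range x).isCompact_convexHull (𝕜 := ℝ)).isClosed h0
  rw [map_zero] at hu
  obtain ⟨q, hq⟩ := Submodule.exists_isCompl U
  set pr := Submodule.linearProjOfIsCompl U q hq with hpr
  refine ⟨-(φ.toLinearMap.comp (e.toLinearMap.comp pr)), fun i => ?_⟩
  have hpri : pr (G.α i) = a i := by
    have : (G.α i) ∈ U := Submodule.subset_span (Set.mem_range_self i)
    exact Submodule.linearProjOfIsCompl_apply_left hq ⟨G.α i, this⟩
  have hxi := hs (x i) (subset_convexHull ℝ _ (Set.mem_range_self i))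
  simp only [LinearMap.neg_apply, LinearMap.comp_apply, hpri]
  change -φ (x i) > 0
  linarith

end GeomRep

namespace GeomRep

open ConeAux

variable {B : Type*} [Fintype B] {W : Type*} [Group W]
  {M : CoxeterMatrix B} {cs : CoxeterSystem M W}
  {V : Type*} [AddCommGroup V] [Module ℝ V] (G : GeomRep M cs V)

theorem refl_combo (i j : B) (p q : ℝ) :
    G.π (cs.simple i) (p • G.α i + q • G.α j) =
      (-p - 2 * G.bil (G.α i) (G.α j) * q) • G.α i + q • G.α j := by
  rw [G.simple_refl]
  have : G.bil (G.α i) (p • G.α i + q • G.α j)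
      = p + G.bil (G.α i) (G.α j) * q := by
    simp [map_add, map_smul, G.norm_one i, smul_eq_mul, mul_comm]
  rw [this]
  module

theorem refl_combo' (i j : B) (p q : ℝ) :
    G.π (cs.simple j) (p • G.α i + q • G.α j) =
      p • G.α i + (-q - 2 * G.bil (G.α i) (G.α j) * p) • G.α j := by
  rw [G.simple_refl]
  have : G.bil (G.α j) (p • G.α i + q • G.α j)
      = G.bil (G.α i) (G.α j) * p + q := by
    rw [map_add, map_smul, map_smul, G.norm_one j, G.bil_symm (G.α j) (G.α i)]
    simp [smul_eq_mul, mul_comm]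
  rw [this]
  module

theorem alt_succ (i j : B) (k : ℕ) (p q : ℝ)
    (h : G.π (cs.wordProd (CoxeterSystem.alternatingWord i j k)) (G.α i)
      = p • G.α i + q • G.α j) :
    G.π (cs.wordProd (CoxeterSystem.alternatingWord i j (k+1))) (G.α i)
      = if Even k then
          p • G.α i + (-q - 2 * G.bil (G.α i) (G.α j) * p) • G.α j
        else
          (-p - 2 * G.bil (G.α i) (G.α j) * q) • G.α i + q • G.α j := by
  rw [CoxeterSystem.alternatingWord_succ', cs.wordProd_cons, G.pi_mul_apply, h]
  by_cases hk : Even k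
  · simp only [hk, if_true]
    exact G.refl_combo' i j p q
  · simp only [hk, if_false]
    exact G.refl_combo i j p q

private theorem sin_rec (x θ : ℝ) :
    Real.sin (x + θ) = 2 * Real.sin x * Real.cos θ - Real.sin (x - θ) := by
  rw [Real.sin_add, Real.sin_sub]; ring

theorem alt_coords_cos (i j : B) (hij : i ≠ j) (hM : M.M i j ≠ 0) (k : ℕ) :
    G.π (cs.wordProd (CoxeterSystem.alternatingWord i j k)) (G.α i) =
      ((if Even k then Real.sin (((k:ℝ)+1) * (Real.pi / (M.M i j : ℝ)))
          else Real.sin ((k:ℝ) * (Real.pi / (M.M i j : ℝ))))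
        / Real.sin (Real.pi / (M.M i j : ℝ))) • G.α i +
      ((if Even k then Real.sin ((k:ℝ) * (Real.pi / (M.M i j : ℝ)))
          else Real.sin (((k:ℝ)+1) * (Real.pi / (M.M i j : ℝ))))
        / Real.sin (Real.pi / (M.M i j : ℝ))) • G.α j := by
  set θ := Real.pi / (M.M i j : ℝ) with hθ
  have h2 : 2 ≤ M.M i j := by
    have := M.off_diagonal i j hij; omega
  have hm2 : (2:ℝ) ≤ (M.M i j : ℝ) := by exact_mod_cast h2
  have hθpos : 0 < θ := by
    rw [hθ]; positivity
  have hθlt : θ < Real.pi := by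
    rw [hθ, div_lt_iff₀ (by linarith)]
    nlinarith [Real.pi_pos]
  have hsin : 0 < Real.sin θ := Real.sin_pos_of_pos_of_lt_pi hθpos hθlt
  have hc : G.bil (G.α i) (G.α j) = - Real.cos θ := G.angle_finite i j hij hM
  induction k with
  | zero =>
    simp only [Nat.cast_zero, Even.zero, if_true, zero_add, one_mul, zero_mul,
      Real.sin_zero, zero_div, zero_smul, add_zero, div_self hsin.ne', one_smul]
    show G.π (cs.wordProd []) (G.α i) = G.α i
    rw [cs.wordProd_nil, map_one]
    rfl
  | succ k ih =>
    rw [G.alt_succ i j k _ _ ih, hc]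
    have key : ∀ x : ℝ, Real.sin (x + θ) = 2 * Real.sin x * Real.cos θ - Real.sin (x - θ) :=
      fun x => sin_rec x θ
    by_cases hk : Even k
    · have hk1 : ¬ Even (k+1) := by simp [Nat.even_add_one, hk]
      simp only [hk, hk1, if_true, if_false]
      congr 1
      · push_cast; ring_nf
      · congr 1
        have e1 : ((k:ℝ)+1+1) * θ = ((k:ℝ)+1)*θ + θ := by ring
        have e2 : (k:ℝ) * θ = ((k:ℝ)+1)*θ - θ := by ring
        push_cast
        rw [e1, key, ← e2]
        field_simp
        ring
    · have hk1 : Even (k+1) := by simp [Nat.even_add_one, hk]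
      simp only [hk, hk1, if_true, if_false]
      congr 1
      · congr 1
        have e1 : ((k:ℝ)+1+1) * θ = ((k:ℝ)+1)*θ + θ := by ring
        have e2 : (k:ℝ) * θ = ((k:ℝ)+1)*θ - θ := by ring
        push_cast
        rw [e1, key, ← e2]
        field_simp
        ring
      · congr 1
        push_cast; ring_nf

theorem alt_nonneg_cos (i j : B) (hij : i ≠ j) (hM : M.M i j ≠ 0) {k : ℕ}
    (hk : k < M.M i j) :
    ∃ p q : ℝ, 0 ≤ p ∧ 0 ≤ q ∧
      G.π (cs.wordProd (CoxeterSystem.alternatingWord i j k)) (G.α i)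
        = p • G.α i + q • G.α j := by
  set θ := Real.pi / (M.M i j : ℝ) with hθ
  have h2 : 2 ≤ M.M i j := by
    have := M.off_diagonal i j hij; omega
  have hm2 : (2:ℝ) ≤ (M.M i j : ℝ) := by exact_mod_cast h2
  have hθpos : 0 < θ := by rw [hθ]; positivity
  have hθlt : θ < Real.pi := by
    rw [hθ, div_lt_iff₀ (by linarith)]
    nlinarith [Real.pi_pos]
  have hsin : 0 < Real.sin θ := Real.sin_pos_of_pos_of_lt_pi hθpos hθlt
  have hmR : (0:ℝ) < (M.M i j : ℝ) := by linarith
  have hk1 : ((k:ℝ)+1) ≤ (M.M i j : ℝ) := by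
    have : (k:ℝ) + 1 = ((k+1 : ℕ) : ℝ) := by push_cast; ring
    rw [this]
    exact_mod_cast hk
  have hkk : ((k:ℝ)+1) * θ ≤ Real.pi := by
    have h1 : ((k:ℝ)+1) * θ ≤ (M.M i j : ℝ) * θ :=
      mul_le_mul_of_nonneg_right hk1 hθpos.le
    have h2' : (M.M i j : ℝ) * θ = Real.pi := by
      rw [hθ, mul_comm, div_mul_cancel₀ _ hmR.ne']
    linarith
  have hk0 : 0 ≤ (k:ℝ) * θ := by positivity
  have hkk' : (k:ℝ) * θ ≤ Real.pi := by nlinarith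
  have s1 : 0 ≤ Real.sin (((k:ℝ)+1) * θ) :=
    Real.sin_nonneg_of_nonneg_of_le_pi (by positivity) hkk
  have s2 : 0 ≤ Real.sin ((k:ℝ) * θ) :=
    Real.sin_nonneg_of_nonneg_of_le_pi hk0 hkk'
  refine ⟨_, _, ?_, ?_, G.alt_coords_cos i j hij hM k⟩
  · apply div_nonneg _ hsin.le
    split <;> assumption
  · apply div_nonneg _ hsin.le
    split <;> assumption

end GeomRep

namespace GeomRep

open ConeAux

variable {B : Type*} [Fintype B] {W : Type*} [Group W]
  {M : CoxeterMatrix B} {cs : CoxeterSystem M W}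
  {V : Type*} [AddCommGroup V] [Module ℝ V] (G : GeomRep M cs V)

theorem alt_nonneg_inf (i j : B) (hij : i ≠ j) (hM : M.M i j = 0) (k : ℕ) :
    ∃ p q : ℝ, 0 ≤ p ∧ 0 ≤ q ∧ (if Even k then q ≤ p else p ≤ q) ∧
      G.π (cs.wordProd (CoxeterSystem.alternatingWord i j k)) (G.α i)
        = p • G.α i + q • G.α j := by
  have hc : G.bil (G.α i) (G.α j) ≤ -1 := G.angle_infinite i j hij hM
  induction k with
  | zero =>
    refine ⟨1, 0, zero_le_one, le_refl 0, by simp, ?_⟩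
    show G.π (cs.wordProd []) (G.α i) = _
    rw [cs.wordProd_nil, map_one]
    simp
  | succ k ih =>
    obtain ⟨p, q, hp, hq, hpq, heq⟩ := ih
    rw [G.alt_succ i j k p q heq]
    by_cases hk : Even k
    · have hk1 : ¬ Even (k+1) := by simp [Nat.even_add_one, hk]
      rw [if_pos hk] at hpq ⊢
      refine ⟨p, -q - 2 * G.bil (G.α i) (G.α j) * p, hp, by nlinarith, ?_, rfl⟩
      rw [if_neg hk1]
      nlinarith
    · have hk1 : Even (k+1) := by simp [Nat.even_add_one, hk]
      rw [if_neg hk] at hpq ⊢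
      refine ⟨-p - 2 * G.bil (G.α i) (G.α j) * q, q, by nlinarith, hq, ?_, rfl⟩
      rw [if_pos hk1]
      nlinarith

theorem dihedral_nonneg (i j : B) (hij : i ≠ j) {k : ℕ}
    (hk : M.M i j = 0 ∨ k < M.M i j) :
    ∃ p q : ℝ, 0 ≤ p ∧ 0 ≤ q ∧
      G.π (cs.wordProd (CoxeterSystem.alternatingWord i j k)) (G.α i)
        = p • G.α i + q • G.α j := by
  rcases hk with hM | hk
  · obtain ⟨p, q, hp, hq, _, heq⟩ := G.alt_nonneg_inf i j hij hM k
    exact ⟨p, q, hp, hq, heq⟩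
  · exact G.alt_nonneg_cos i j hij (by omega) hk

theorem strip (n : ℕ) : ∀ (w : W) (i j : B), i ≠ j → cs.length w ≤ n →
    cs.length w < cs.length (w * cs.simple i) →
    ∃ (u : W) (k : ℕ), cs.length u + k = cs.length w ∧
      w = u * cs.wordProd (CoxeterSystem.alternatingWord i j k) ∧
      cs.length u < cs.length (u * cs.simple i) ∧
      cs.length u < cs.length (u * cs.simple j) := by
  induction n with
  | zero =>
    intro w i j hij hw hi
    have hw0 : cs.length w = 0 := Nat.le_zero.mp hw
    have hw1 : w = 1 := cs.length_eq_zero_iff.mp hw0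
    refine ⟨w, 0, by simp, by simp [CoxeterSystem.alternatingWord, cs.wordProd_nil], hi, ?_⟩
    rw [hw1]
    simp [cs.length_simple]
  | succ n ih =>
    intro w i j hij hw hi
    by_cases hj : cs.length w < cs.length (w * cs.simple j)
    · exact ⟨w, 0, by simp, by simp [CoxeterSystem.alternatingWord, cs.wordProd_nil], hi, hj⟩
    · have hj' : cs.length (w * cs.simple j) + 1 = cs.length w := by
        rcases cs.length_mul_simple w j with h | h
        · omega
        · exact h
      have hcancel : w * cs.simple j * cs.simple j = w := cs.simple_mul_simple_cancel_right j
      have hrec : cs.length (w * cs.simple j) <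
          cs.length ((w * cs.simple j) * cs.simple j) := by
        rw [hcancel]; omega
      obtain ⟨u, k, hlen, heq, hui, huj⟩ := ih (w * cs.simple j) j i hij.symm (by omega) hrec
      refine ⟨u, k+1, by omega, ?_, huj, hui⟩
      have hw' : w = (w * cs.simple j) * cs.simple j := hcancel.symm
      rw [hw', heq, mul_assoc, ← cs.wordProd_concat]
      rfl

theorem pos_of_length_lt (n : ℕ) : ∀ (w : W) (i : B), cs.length w ≤ n →
    cs.length w < cs.length (w * cs.simple i) →
    G.π w (G.α i) ∈ coneOf (Set.range G.α) := by
  induction n with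
  | zero =>
    intro w i hw _
    have hw1 : w = 1 := cs.length_eq_zero_iff.mp (Nat.le_zero.mp hw)
    rw [hw1, map_one]
    exact subset_cone _ (Set.mem_range_self i)
  | succ n ih =>
    intro w i hw hi
    by_cases hw1 : w = 1
    · rw [hw1, map_one]
      exact subset_cone _ (Set.mem_range_self i)
    · obtain ⟨j, hj⟩ := cs.exists_rightDescent_of_ne_one hw1
      have hij : i ≠ j := by
        rintro rfl
        exact absurd hj (by simp [CoxeterSystem.IsRightDescent]; omega)
      obtain ⟨u, k, hlen, heq, hui, huj⟩ := strip (cs := cs) (cs.length w) w i j hij le_rfl hi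
      have hk1 : 1 ≤ k := by
        by_contra h
        have : k = 0 := by omega
        subst this
        have : w = u := by
          simpa [CoxeterSystem.alternatingWord, cs.wordProd_nil] using heq
        rw [← this] at huj
        exact absurd hj (by simp [CoxeterSystem.IsRightDescent]; omega)
      have hulen : cs.length u ≤ n := by
        by_contra h
        omega
      have hwsi : cs.length (w * cs.simple i) = cs.length w + 1 := by
        rcases cs.length_mul_simple w i with h | h
        · exact h
        · omega
      have hbound : M.M i j = 0 ∨ k < M.M i j := by
        by_cases hM : M.M i j = 0
        · exact Or.inl hM
        · right
          by_contra hcon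
          have hMk : M.M j i < k + 1 := by
            rw [M.symmetric j i]; omega
          have hnred := cs.not_isReduced_alternatingWord j i (by rw [M.symmetric j i]; exact hM) hMk
          have hform : w * cs.simple i
              = u * cs.wordProd (CoxeterSystem.alternatingWord j i (k+1)) := by
            rw [heq, mul_assoc, ← cs.wordProd_concat]
            rfl
          have hub : cs.length (cs.wordProd (CoxeterSystem.alternatingWord j i (k+1))) < k+1 := by
            have hle := cs.length_wordProd_le (CoxeterSystem.alternatingWord j i (k+1))
            rw [CoxeterSystem.length_alternatingWord] at hle
            rcases Nat.lt_or_ge (cs.length (cs.wordProd (CoxeterSystem.alternatingWord j i (k+1)))) (k+1) with h | h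
            · exact h
            · exfalso
              apply hnred
              unfold CoxeterSystem.IsReduced
              rw [CoxeterSystem.length_alternatingWord]
              omega
          have hlb : cs.length (w * cs.simple i) ≤ cs.length u
              + cs.length (cs.wordProd (CoxeterSystem.alternatingWord j i (k+1))) := by
            rw [hform]
            exact cs.length_mul_le _ _
          omega
      obtain ⟨p, q, hp, hq, hcoord⟩ := G.dihedral_nonneg i j hij hbound
      have : G.π w (G.α i) = p • G.π u (G.α i) + q • G.π u (G.α j) := by
        rw [heq, G.pi_mul_apply, hcoord, map_add, map_smul, map_smul]
      rw [this]
      exact add_mem (smul_mem hp (ih u i hulen hui)) (smul_mem hq (ih u j hulen huj))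

theorem root_dichotomy {γ : V} (hγ : γ ∈ G.Phi) :
    γ ∈ coneOf (Set.range G.α) ∨ -γ ∈ coneOf (Set.range G.α) := by
  obtain ⟨w, i, rfl⟩ := hγ
  rcases cs.length_mul_simple w i with h | h
  · exact Or.inl (G.pos_of_length_lt (cs.length w) w i le_rfl (by omega))
  · right
    have hcancel : (w * cs.simple i) * cs.simple i = w := cs.simple_mul_simple_cancel_right i
    have hlt : cs.length (w * cs.simple i) <
        cs.length ((w * cs.simple i) * cs.simple i) := by rw [hcancel]; omega
    have hpos := G.pos_of_length_lt (cs.length (w * cs.simple i)) (w * cs.simple i) i le_rfl hlt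
    have : -G.π w (G.α i) = G.π (w * cs.simple i) (G.α i) := by
      rw [G.pi_mul_apply, G.pi_simple_self, map_neg]
    rw [this]
    exact hpos

theorem mem_PhiPos_or {γ : V} (hγ : γ ∈ G.Phi) : γ ∈ G.PhiPos ∨ -γ ∈ G.PhiPos := by
  rcases G.root_dichotomy hγ with h | h
  · exact Or.inl ⟨hγ, h⟩
  · exact Or.inr ⟨G.neg_mem_Phi hγ, h⟩

end GeomRep

namespace ConeAux

variable {V : Type*} [AddCommGroup V] [Module ℝ V]

theorem map_cone (L : V →ₗ[ℝ] V) {X : Set V} {v : V} (hv : v ∈ coneOf X) :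
    L v ∈ coneOf (L '' X) := by
  obtain ⟨n, c, f, hc, hf, rfl⟩ := hv
  exact ⟨n, c, fun i => L (f i), hc, fun i => Set.mem_image_of_mem L (hf i),
    by rw [map_sum]; simp [map_smul]⟩

theorem cone_pair {a b v : V} (h : v ∈ coneOf ({a, b} : Set V)) :
    ∃ r s : ℝ, 0 ≤ r ∧ 0 ≤ s ∧ v = r • a + s • b := by
  classical
  obtain ⟨n, c, f, hc, hf, rfl⟩ := h
  refine ⟨∑ i ∈ Finset.univ.filter (fun i => f i = a), c i,
    ∑ i ∈ Finset.univ.filter (fun i => ¬(f i = a)), c i,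
    Finset.sum_nonneg fun i _ => hc i, Finset.sum_nonneg fun i _ => hc i, ?_⟩
  have h1 : (∑ i ∈ Finset.univ.filter (fun i => f i = a), c i) • a
      = ∑ i ∈ Finset.univ.filter (fun i => f i = a), c i • f i := by
    rw [Finset.sum_smul]
    exact Finset.sum_congr rfl fun i hi => by rw [(Finset.mem_filter.mp hi).2]
  have h2 : (∑ i ∈ Finset.univ.filter (fun i => ¬(f i = a)), c i) • b
      = ∑ i ∈ Finset.univ.filter (fun i => ¬(f i = a)), c i • f i := by
    rw [Finset.sum_smul]
    refine Finset.sum_congr rfl fun i hi => ?_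
    have := (Finset.mem_filter.mp hi).2
    have hfi : f i = b := by
      rcases hf i with h | h
      · exact absurd h this
      · exact h
    rw [hfi]
  rw [h1, h2, Finset.sum_filter_add_sum_filter_not]

theorem cone_sep {X : Set V} (g : V →ₗ[ℝ] ℝ) (hg : ∀ x ∈ X, 0 < g x) {v : V}
    (hv : v ∈ coneOf X) : 0 ≤ g v ∧ (g v = 0 → v = 0) := by
  obtain ⟨n, c, f, hc, hf, rfl⟩ := hv
  have hterm : ∀ i, 0 ≤ c i * g (f i) := fun i => mul_nonneg (hc i) (hg _ (hf i)).le
  have hgv : g (∑ i, c i • f i) = ∑ i, c i * g (f i) := by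
    rw [map_sum]; simp [map_smul, smul_eq_mul]
  constructor
  · rw [hgv]; exact Finset.sum_nonneg fun i _ => hterm i
  · intro h0
    rw [hgv] at h0
    have hall := (Finset.sum_eq_zero_iff_of_nonneg fun i _ => hterm i).mp h0
    have hci : ∀ i, c i = 0 := by
      intro i
      have h1 := hall i (Finset.mem_univ i)
      have h2 := hg _ (hf i)
      rcases mul_eq_zero.mp h1 with h | h
      · exact h
      · exact absurd h (ne_of_gt h2)
    exact Finset.sum_eq_zero fun i _ => by rw [hci i, zero_smul]

end ConeAux

namespace GeomRep

open ConeAux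

variable {B : Type*} [Fintype B] {W : Type*} [Group W]
  {M : CoxeterMatrix B} {cs : CoxeterSystem M W}
  {V : Type*} [AddCommGroup V] [Module ℝ V] (G : GeomRep M cs V)

theorem alpha_mem_PhiPos (i : B) : G.α i ∈ G.PhiPos :=
  ⟨⟨1, i, by rw [map_one]; rfl⟩, subset_cone _ (Set.mem_range_self i)⟩

theorem PhiPos_f_pos (f : V →ₗ[ℝ] ℝ) (hf : ∀ i, 0 < f (G.α i)) {v : V}
    (hv : v ∈ G.PhiPos) : 0 < f v := by
  have h := cone_sep f (fun x hx => by obtain ⟨i, rfl⟩ := hx; exact hf i) hv.2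
  rcases lt_or_eq_of_le h.1 with h' | h'
  · exact h'
  · exact absurd (h.2 h'.symm) (fun h0 => G.zero_not_mem_Phi (h0 ▸ hv.1))

theorem simple_perm (i : B) {β : V} (hβ : β ∈ G.PhiPos) (hne : β ≠ G.α i) :
    G.π (cs.simple i) β ∈ G.PhiPos := by
  classical
  have hΦ' : G.π (cs.simple i) β ∈ G.Phi := G.pi_mem_Phi _ hβ.1
  rcases G.mem_PhiPos_or hΦ' with h | h
  · exact h
  · exfalso
    obtain ⟨-, hcone'⟩ := h
    obtain ⟨c, hc, hcsum⟩ := G.mem_cone_range_iff.mp hβ.2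
    obtain ⟨d, hd, hdsum⟩ := G.mem_cone_range_iff.mp hcone'
    set t := 2 * G.bil (G.α i) β with ht
    have h1 : G.π (cs.simple i) β = β - t • G.α i := G.simple_refl i β
    have hkey : ∑ j, (c j + d j) • G.α j = t • G.α i := by
      have : ∑ j, (c j + d j) • G.α j = (∑ j, c j • G.α j) + (∑ j, d j • G.α j) := by
        rw [← Finset.sum_add_distrib]
        exact Finset.sum_congr rfl fun j _ => add_smul _ _ _
      rw [this, hcsum, hdsum, h1]
      abel
    rcases le_or_gt (t - c i - d i) 0 with hcase | hcase
    · have hz := G.pos_indep (fun j => c j + d j - (if j = i then t else 0))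
        (fun j => by
          by_cases hji : j = i
          · subst hji; simp only [if_true]; linarith [hc j, hd j]
          · simp only [hji, if_false]; linarith [hc j, hd j])
        (by
          have : ∑ j, (c j + d j - (if j = i then t else 0)) • G.α j
              = ∑ j, (c j + d j) • G.α j - ∑ j, (if j = i then t else 0) • G.α j := by
            rw [← Finset.sum_sub_distrib]
            exact Finset.sum_congr rfl fun j _ => sub_smul _ _ _
          rw [this, hkey]
          simp [ite_smul])
      have hcd : ∀ j, j ≠ i → c j = 0 := by
        intro j hji
        have := hz j
        simp only [hji, if_false, sub_zero] at this
        linarith [hc j, hd j]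
      have hβi : β = c i • G.α i := by
        rw [← hcsum, Finset.sum_eq_single i]
        · intro j _ hji
          rw [hcd j hji, zero_smul]
        · intro h; exact absurd (Finset.mem_univ i) h
      have hnorm : G.bil β β = 1 := G.root_norm hβ.1
      rw [hβi] at hnorm
      simp only [map_smul, LinearMap.smul_apply, smul_eq_mul, G.norm_one i] at hnorm
      have hci : c i = 1 := by nlinarith [hc i]
      rw [hci, one_smul] at hβi
      exact hne hβi
    · have hsum2 : ∑ j ∈ Finset.univ.erase i, (c j + d j) • G.α j
          = (t - c i - d i) • G.α i := by
        have := Finset.add_sum_erase Finset.univ (fun j => (c j + d j) • G.α j)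
          (Finset.mem_univ i)
        rw [← this] at hkey
        have : ∑ j ∈ Finset.univ.erase i, (c j + d j) • G.α j
            = t • G.α i - (c i + d i) • G.α i := by
          rw [← hkey]; abel
        rw [this, ← sub_smul]
        congr 1
        ring
      have hL : G.bil (∑ j ∈ Finset.univ.erase i, (c j + d j) • G.α j) (G.α i) ≤ 0 := by
        rw [map_sum, LinearMap.sum_apply]
        apply Finset.sum_nonpos
        intro j hj
        have hji : j ≠ i := Finset.ne_of_mem_erase hj
        rw [map_smul, LinearMap.smul_apply, smul_eq_mul]
        exact mul_nonpos_of_nonneg_of_nonpos (by linarith [hc j, hd j])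
          (G.offdiag_nonpos hji)
      rw [hsum2, map_smul, LinearMap.smul_apply, smul_eq_mul, G.norm_one i, mul_one] at hL
      linarith

theorem exists_simple_mem (f : V →ₗ[ℝ] ℝ) (hf : ∀ i, 0 < f (G.α i))
    {A : Set V} (hA : A ⊆ G.PhiPos) (hfin : A.Finite) (hne : A.Nonempty)
    (hbc : G.IsBiclosed A) : ∃ i, G.α i ∈ A := by
  classical
  obtain ⟨β, hβF, hmin⟩ := hfin.toFinset.exists_min_image f
    (by rwa [← Set.Finite.toFinset_nonempty hfin] at hne)
  rw [Set.Finite.mem_toFinset] at hβF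
  have hβpos := hA hβF
  obtain ⟨c, hc, hcsum⟩ := G.mem_cone_range_iff.mp hβpos.2
  have hnorm : G.bil β β = 1 := G.root_norm hβpos.1
  have hex : ∃ j, 0 < c j * G.bil (G.α j) β := by
    by_contra h
    push_neg at h
    have expand : G.bil (∑ j, c j • G.α j) β = ∑ j, c j * G.bil (G.α j) β := by
      simp [map_sum, LinearMap.sum_apply, map_smul, LinearMap.smul_apply, smul_eq_mul]
    have h1 : (1:ℝ) ≤ 0 := by
      rw [← hnorm]
      calc G.bil β β = G.bil (∑ j, c j • G.α j) β := by rw [hcsum]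
        _ = ∑ j, c j * G.bil (G.α j) β := expand
        _ ≤ 0 := Finset.sum_nonpos fun j _ => h j
    linarith
  obtain ⟨j, hj⟩ := hex
  have hbilpos : 0 < G.bil (G.α j) β := by
    rcases le_or_gt (G.bil (G.α j) β) 0 with h | h
    · nlinarith [hc j]
    · exact h
  by_cases hβj : β = G.α j
  · exact ⟨j, hβj ▸ hβF⟩
  by_cases hαjA : G.α j ∈ A
  · exact ⟨j, hαjA⟩
  exfalso
  have hγ : G.π (cs.simple j) β ∈ G.PhiPos := G.simple_perm j hβpos hβj
  set γ := G.π (cs.simple j) β with hγdef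
  set t := 2 * G.bil (G.α j) β with ht
  have htpos : 0 < t := by rw [ht]; linarith
  have hβeq : β = t • G.α j + (1:ℝ) • γ := by
    rw [hγdef, G.simple_refl j β, one_smul, ht]
    abel
  by_cases hγA : γ ∈ A
  · have hmin' := hmin γ (by rwa [Set.Finite.mem_toFinset])
    have : f β = t * f (G.α j) + f γ := by
      rw [hβeq]; simp [map_add, map_smul, smul_eq_mul]
    nlinarith [hf j]
  · have hsub := hbc.2 (G.α j) ⟨G.alpha_mem_PhiPos j, hαjA⟩ γ ⟨hγ, hγA⟩
    have hβmem : β ∈ coneOf ({G.α j, γ} : Set V) ∩ G.Phi :=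
      ⟨mem_pair htpos.le zero_le_one hβeq, hβpos.1⟩
    exact (hsub hβmem).2 hβF

end GeomRep

namespace GeomRep

open ConeAux

variable {B : Type*} [Fintype B] {W : Type*} [Group W]
  {M : CoxeterMatrix B} {cs : CoxeterSystem M W}
  {V : Type*} [AddCommGroup V] [Module ℝ V] (G : GeomRep M cs V)

theorem exists_sep (f : V →ₗ[ℝ] ℝ) (hf : ∀ i, 0 < f (G.α i)) :
    ∀ (n : ℕ) (A : Set V), A ⊆ G.PhiPos → A.Finite → A.ncard ≤ n → G.IsBiclosed A →
    ∃ g : V →ₗ[ℝ] ℝ, (∀ a ∈ A, 0 < g a) ∧ (∀ b ∈ G.PhiPos \ A, g b < 0) := by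
  intro n
  induction n with
  | zero =>
    intro A hA hfin hcard hbc
    have hA0 : A = ∅ := by
      rw [← Set.ncard_eq_zero hfin]; omega
    subst hA0
    refine ⟨-f, by simp, fun b hb => ?_⟩
    have := G.PhiPos_f_pos f hf hb.1
    simp only [LinearMap.neg_apply]
    linarith
  | succ n ih =>
    intro A hA hfin hcard hbc
    rcases Set.eq_empty_or_nonempty A with rfl | hne
    · refine ⟨-f, by simp, fun b hb => ?_⟩
      have := G.PhiPos_f_pos f hf hb.1
      simp only [LinearMap.neg_apply]
      linarith
    obtain ⟨i, hiA⟩ := G.exists_simple_mem f hf hA hfin hne hbc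
    set σ := G.π (cs.simple i) with hσdef
    set A' := (fun v => σ v) '' (A \ {G.α i}) with hA'def
    have hσinj : Function.Injective (fun v : V => σ v) := σ.injective
    have hinv : ∀ v : V, σ (σ v) = v := G.pi_invol i
    have hσα : σ (G.α i) = -G.α i := G.pi_simple_self i
    have hA'sub : A' ⊆ G.PhiPos := by
      rintro _ ⟨β, ⟨hβA, hβne⟩, rfl⟩
      exact G.simple_perm i (hA hβA) (by simpa using hβne)
    have hA'fin : A'.Finite := (hfin.subset Set.diff_subset).image _
    have hcard' : A'.ncard ≤ n := by
      rw [hA'def, Set.ncard_image_of_injective _ hσinj]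
      have h1 : (A \ {G.α i}).ncard = A.ncard - 1 :=
        Set.ncard_diff_singleton_of_mem hiA
      have h2 : 0 < A.ncard := (Set.ncard_pos hfin).mpr hne
      omega
    have hαnA' : G.α i ∉ A' := by
      rintro ⟨β, ⟨hβA, hβne⟩, hβeq⟩
      have hβv : β = -G.α i := by
        rw [← hinv β]
        show σ (σ β) = -G.α i
        rw [show σ β = G.α i from hβeq, hσα]
      have h1 := G.PhiPos_f_pos f hf (hA hβA)
      rw [hβv, map_neg] at h1
      linarith [hf i]
    have hforw : ∀ {b : V}, b ∈ G.PhiPos \ A' → b ≠ G.α i → σ b ∈ G.PhiPos \ A := by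
      rintro b ⟨hbP, hbA'⟩ hbne
      refine ⟨G.simple_perm i hbP hbne, fun hσbA => ?_⟩
      by_cases hσbα : σ b = G.α i
      · have hbv : b = -G.α i := by
          rw [← hinv b, hσbα, hσα]
        have h1 := G.PhiPos_f_pos f hf hbP
        rw [hbv, map_neg] at h1
        linarith [hf i]
      · exact hbA' ⟨σ b, ⟨hσbA, hσbα⟩, hinv b⟩
    have hpairpos : ∀ x y : V, x ∈ G.PhiPos → y ∈ G.PhiPos →
        ∀ z ∈ ({x, y} : Set V), 0 < f z := by
      intro x y hx hy z hz
      rcases hz with rfl | rfl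
      · exact G.PhiPos_f_pos f hf hx
      · exact G.PhiPos_f_pos f hf hy
    have hbc' : G.IsBiclosed A' := by
      constructor
      · rintro a' ha' b' hb' v ⟨hvc, hvΦ⟩
        obtain ⟨a, ⟨haA, hane⟩, rfl⟩ := ha'
        obtain ⟨b, ⟨hbA, hbne⟩, rfl⟩ := hb'
        have hσv : σ v ∈ coneOf ({a, b} : Set V) := by
          have h1 := map_cone (σ : V ≃ₗ[ℝ] V).toLinearMap hvc
          rw [Set.image_pair] at h1
          simpa [hinv a, hinv b] using h1
        have hσvΦ : σ v ∈ G.Phi := G.pi_mem_Phi _ hvΦ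
        have hσvA : σ v ∈ A := hbc.1 a haA b hbA ⟨hσv, hσvΦ⟩
        have hσvne : σ v ≠ G.α i := by
          intro h
          have hvnα : v = -G.α i := by rw [← hinv v, h, hσα]
          have h0 := (cone_sep f (hpairpos _ _ (hA'sub ⟨a, ⟨haA, hane⟩, rfl⟩)
            (hA'sub ⟨b, ⟨hbA, hbne⟩, rfl⟩)) hvc).1
          rw [hvnα, map_neg] at h0
          linarith [hf i]
        exact ⟨σ v, ⟨hσvA, hσvne⟩, hinv v⟩
      · rintro b₁ hb₁ b₂ hb₂ v ⟨hvc, hvΦ⟩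
        have hvP : v ∈ G.PhiPos := by
          refine ⟨hvΦ, cone_trans ?_ hvc⟩
          intro x hx
          rcases hx with rfl | rfl
          · exact hb₁.1.2
          · exact hb₂.1.2
        refine ⟨hvP, fun hvA' => ?_⟩
        obtain ⟨δ, ⟨hδA, hδne⟩, hδeq⟩ := hvA'
        have hδv : δ = σ v := by rw [← hδeq, hinv]
        obtain ⟨r, s, hr, hs, hvrs⟩ := cone_pair hvc
        have key : ∀ b' : V, b' ∈ G.PhiPos \ A' → b' ≠ G.α i →
            ∀ r' s' : ℝ, 0 ≤ r' → 0 ≤ s' → v = r' • G.α i + s' • b' → False := by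
          intro b' hb' h2 r' s' hr' hs' hveq
          have hδexp : δ = -(r' • G.α i) + s' • σ b' := by
            rw [hδv, hveq, map_add, map_smul, map_smul, hσα, smul_neg]
          have hs' : s' • σ b' = δ + r' • G.α i := by
            rw [hδexp]; abel
          by_cases hs0 : s' = 0
          · have hδα : δ = -(r' • G.α i) := by
              rw [hδexp, hs0, zero_smul, add_zero]
            have h1 := G.PhiPos_f_pos f hf (hA hδA)
            rw [hδα, map_neg, map_smul, smul_eq_mul] at h1
            nlinarith [hf i]
          · have hspos : 0 < s' := lt_of_le_of_ne ‹0 ≤ s'› (Ne.symm hs0)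
            have hb2exp : σ b' = (s'⁻¹) • δ + (s'⁻¹ * r') • G.α i := by
              have h3 := congrArg (fun x : V => s'⁻¹ • x) hs'
              simp only [smul_smul, inv_mul_cancel₀ hs0, one_smul, smul_add] at h3
              rw [h3]
            have hmem : σ b' ∈ coneOf ({δ, G.α i} : Set V) :=
              mem_pair (inv_nonneg.mpr hspos.le)
                (mul_nonneg (inv_nonneg.mpr hspos.le) hr') hb2exp
            have hσb'Φ : σ b' ∈ G.Phi := (G.simple_perm i hb'.1 h2).1
            have hmemA : σ b' ∈ A := hbc.1 δ hδA (G.α i) hiA ⟨hmem, hσb'Φ⟩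
            exact (hforw hb' h2).2 hmemA
        by_cases h1 : b₁ = G.α i
        · by_cases h2 : b₂ = G.α i
          · have hveq : v = (r + s) • G.α i := by
              rw [hvrs, h1, h2, ← add_smul]
            have hδeq2 : δ = -((r+s) • G.α i) := by
              rw [hδv, hveq, map_smul, hσα, smul_neg]
            have hfδ := G.PhiPos_f_pos f hf (hA hδA)
            rw [hδeq2, map_neg, map_smul, smul_eq_mul] at hfδ
            nlinarith [hf i]
          · exact key b₂ hb₂ h2 r s hr hs (by rw [hvrs, h1])
        · by_cases h2 : b₂ = G.α i
          · exact key b₁ hb₁ h1 s r hs hr (by rw [hvrs, h2]; abel)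
          · have hσb₁ := hforw hb₁ h1
            have hσb₂ := hforw hb₂ h2
            have hσv : σ v ∈ coneOf ({σ b₁, σ b₂} : Set V) := by
              have h3 := map_cone (σ : V ≃ₗ[ℝ] V).toLinearMap hvc
              rw [Set.image_pair] at h3
              simpa using h3
            have h4 : σ v ∈ G.PhiPos \ A :=
              hbc.2 _ hσb₁ _ hσb₂ ⟨hσv, G.pi_mem_Phi _ hvΦ⟩
            exact h4.2 (hδv ▸ hδA)
    obtain ⟨g', hg1, hg2⟩ := ih A' hA'sub hA'fin hcard' hbc'
    refine ⟨g'.comp (σ : V ≃ₗ[ℝ] V).toLinearMap, ?_, ?_⟩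
    · intro a haA
      by_cases hai : a = G.α i
      · have h3 := hg2 (G.α i) ⟨G.alpha_mem_PhiPos i, hαnA'⟩
        simp only [LinearMap.comp_apply, LinearEquiv.coe_coe]
        rw [hai, hσα, map_neg]
        linarith
      · have hmem : σ a ∈ A' := ⟨a, ⟨haA, hai⟩, rfl⟩
        exact hg1 _ hmem
    · intro b hb
      have hbne : b ≠ G.α i := fun h => hb.2 (h ▸ hiA)
      have h1 : σ b ∈ G.PhiPos := G.simple_perm i hb.1 hbne
      have h2 : σ b ∉ A' := by
        rintro ⟨β, ⟨hβA, hβne⟩, hβeq⟩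
        have : β = b := hσinj hβeq
        exact hb.2 (this ▸ hβA)
      exact hg2 _ ⟨h1, h2⟩

theorem biclosed_to_sep {A : Set V} (hA : A ⊆ G.PhiPos) (hfin : A.Finite)
    (hbc : G.IsBiclosed A) : G.IsSeparable A := by
  obtain ⟨f, hf⟩ := G.exists_f
  obtain ⟨g, hg1, hg2⟩ := G.exists_sep f hf A.ncard A hA hfin le_rfl hbc
  ext v
  simp only [Set.mem_inter_iff, Set.mem_singleton_iff]
  constructor
  · rintro ⟨h1, h2⟩
    have ha := cone_sep g hg1 h1
    have hb := cone_sep (-g) (fun x hx => by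
      simp only [LinearMap.neg_apply]; linarith [hg2 x hx]) h2
    apply ha.2
    have := hb.1
    simp only [LinearMap.neg_apply] at this
    linarith [ha.1]
  · rintro rfl
    exact ⟨zero_mem _, zero_mem _⟩

theorem sep_to_biconvex {A : Set V} (hA : A ⊆ G.PhiPos) (hsep : G.IsSeparable A) :
    G.IsBiconvex A := by
  have hconeA : coneOf A ⊆ coneOf (Set.range G.α) :=
    cone_trans fun x hx => (hA hx).2
  have hconeC : coneOf (G.PhiPos \ A) ⊆ coneOf (Set.range G.α) :=
    cone_trans fun x hx => hx.1.2
  constructor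
  · apply Set.eq_of_subset_of_subset
    · intro a ha
      exact ⟨subset_cone _ ha, (hA ha).1⟩
    · rintro v ⟨hvc, hvΦ⟩
      by_contra hvA
      have hvP : v ∈ G.PhiPos := ⟨hvΦ, hconeA hvc⟩
      have h0 : v ∈ coneOf A ∩ coneOf (G.PhiPos \ A) :=
        ⟨hvc, subset_cone _ ⟨hvP, hvA⟩⟩
      rw [hsep] at h0
      exact G.zero_not_mem_Phi (h0 ▸ hvΦ)
  · apply Set.eq_of_subset_of_subset
    · intro a ha
      exact ⟨subset_cone _ ha, ha.1.1⟩
    · rintro v ⟨hvc, hvΦ⟩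
      have hvP : v ∈ G.PhiPos := ⟨hvΦ, hconeC hvc⟩
      refine ⟨hvP, fun hvA => ?_⟩
      have h0 : v ∈ coneOf A ∩ coneOf (G.PhiPos \ A) :=
        ⟨subset_cone _ hvA, hvc⟩
      rw [hsep] at h0
      exact G.zero_not_mem_Phi (h0 ▸ hvΦ)

theorem biconvex_to_biclosed {A : Set V} (hbx : G.IsBiconvex A) :
    G.IsBiclosed A := by
  constructor
  · intro a ha b hb v hv
    rw [hbx.1]
    exact ⟨cone_mono (by
      intro x hx
      rcases hx with rfl | rfl
      · exact ha
      · exact hb) hv.1, hv.2⟩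
  · intro a ha b hb v hv
    rw [hbx.2]
    exact ⟨cone_mono (by
      intro x hx
      rcases hx with rfl | rfl
      · exact ha
      · exact hb) hv.1, hv.2⟩

end GeomRep


/-- For finite `A ⊆ Φ⁺`: biclosed ↔ biconvex ↔ separable. -/
theorem stmt12 {B : Type*} [Fintype B] {W : Type*} [Group W]
    {M : CoxeterMatrix B} {cs : CoxeterSystem M W}
    {V : Type*} [AddCommGroup V] [Module ℝ V] (G : GeomRep M cs V)
    (A : Set V) (hA : A ⊆ G.PhiPos) (hfin : A.Finite) :
    (G.IsBiclosed A ↔ G.IsBiconvex A) ∧ (G.IsBiconvex A ↔ G.IsSeparable A) := by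
  
  have e1 : G.IsBiclosed A → G.IsSeparable A := G.biclosed_to_sep hA hfin
  have e2 : G.IsSeparable A → G.IsBiconvex A := G.sep_to_biconvex hA
  have e3 : G.IsBiconvex A → G.IsBiclosed A := G.biconvex_to_biclosed
  exact ⟨⟨fun h => e2 (e1 h), e3⟩, ⟨fun h => e1 (e3 h), e2⟩⟩
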